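/- Let k ≥ 1, and let (m_l)_{l=1}^k be real numbers defined by m_l = sup of Ẽ_l over (0,∞)^l × (M^l \ Δ_l), where Ẽ_l(t,ξ) = c₂ Σ t_i² h(ξ_i) - c₃ Σ t_i^(n-2) A_{ξ_i} - c₃ Σ_{i≠j} (t_i t_j)^((n-2)/2) G(ξ_i,ξ_j), with c₂, c₃ > 0, n ≥ 7, (M,g) a compact Riemannian manifold, A : M → (0,∞) continuous with positive minimum, h continuous with max_M h > 0, and G : M×M \ diag → (0,∞) continuous with G(x,y) → +∞ as d(x,y) → 0. Then 0 < m₁ < m₂ < … < m_k < +∞. -/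

import Mathlib

open Finset

lemma snoc_injective' {α : Type*} {l : ℕ} {f : Fin l → α} (hf : Function.Injective f)
    {x : α} (hx : ∀ i, f i ≠ x) : Function.Injective (Fin.snoc f x) := by
  intro i j hij
  induction i using Fin.lastCases with
  | last =>
    induction j using Fin.lastCases with
    | last => rfl
    | cast j =>
      rw [Fin.snoc_last, Fin.snoc_castSucc] at hij
      exact absurd hij.symm (hx j)
  | cast i =>
    induction j using Fin.lastCases with
    | last =>
      rw [Fin.snoc_last, Fin.snoc_castSucc] at hij
      exact absurd hij (hx i)
    | cast j =>
      rw [Fin.snoc_castSucc, Fin.snoc_castSucc] at hij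
      exact congrArg Fin.castSucc (hf hij)

lemma double_sum_snoc' {l : ℕ} (F : Fin (l+1) → Fin (l+1) → ℝ)
    (hdiag : F (Fin.last l) (Fin.last l) = 0) :
    ∑ i, ∑ j, F i j = (∑ i : Fin l, ∑ j : Fin l, F i.castSucc j.castSucc)
      + ∑ i : Fin l, (F i.castSucc (Fin.last l) + F (Fin.last l) i.castSucc) := by
  simp only [Fin.sum_univ_castSucc, hdiag, add_zero]
  simp only [Finset.sum_add_distrib]
  ring

lemma g_far {c₂ c₃ a Hb : ℝ} (hc₂ : 0 < c₂) (hc₃ : 0 < c₃) (ha : 0 < a) (hHb : 1 ≤ Hb)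
    {p : ℝ} (hp : 3 ≤ p) (C : ℝ) :
    ∃ T : ℝ, 1 ≤ T ∧ ∀ t : ℝ, T ≤ t → c₂ * Hb * t ^ 2 - c₃ * a * t ^ p ≤ C := by
  refine ⟨max 1 ((c₂ * Hb + |C|) / (c₃ * a)), le_max_left _ _, ?_⟩
  intro t ht
  have ht1 : (1:ℝ) ≤ t := le_trans (le_max_left _ _) ht
  have ht0 : (0:ℝ) < t := lt_of_lt_of_le one_pos ht1
  have h3 : t ^ (3:ℝ) ≤ t ^ p := Real.rpow_le_rpow_of_exponent_le ht1 hp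
  have h3' : t ^ (3:ℝ) = t * t ^ 2 := by
    rw [show (3:ℝ) = ((3:ℕ):ℝ) by norm_num, Real.rpow_natCast]; ring
  have hct : c₂ * Hb + |C| ≤ c₃ * a * t := by
    have h := le_trans (le_max_right _ _) ht
    rw [div_le_iff₀ (by positivity)] at h
    nlinarith
  have ht2 : (1:ℝ) ≤ t ^ 2 := by nlinarith
  have habs : -|C| ≤ C := neg_abs_le C
  have key : c₃ * a * (t * t ^ 2) ≤ c₃ * a * t ^ p := by
    rw [← h3']; exact mul_le_mul_of_nonneg_left h3 (le_of_lt (mul_pos hc₃ ha))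
  nlinarith [key, mul_nonneg (sub_nonneg.2 hct) (sq_nonneg t),
    mul_nonneg (abs_nonneg C) (sub_nonneg.2 ht2)]

lemma small_gain {c₂ c₃ : ℝ} (hc₂ : 0 < c₂) (hc₃ : 0 < c₃) {p : ℝ} (hp : 5 ≤ p)
    {h₀ A₀ K : ℝ} (hh₀ : 0 < h₀) (hA₀ : 0 ≤ A₀) (hK : 0 ≤ K) :
    ∃ s : ℝ, 0 < s ∧ s ≤ 1 ∧ 0 < c₂ * s ^ 2 * h₀ - c₃ * s ^ p * A₀ - s ^ (p/2) * K := by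
  set ε : ℝ := c₂ * h₀ / (c₃ * A₀ + K + 1) with hεdef
  have hden : 0 < c₃ * A₀ + K + 1 := by positivity
  have hε : 0 < ε := by positivity
  refine ⟨min 1 (min ε (ε ^ 2)), by positivity, min_le_left _ _, ?_⟩
  set s : ℝ := min 1 (min ε (ε ^ 2)) with hsdef
  have hs0 : 0 < s := by positivity
  have hs1 : s ≤ 1 := min_le_left _ _
  have hsε : s ≤ ε := le_trans (min_le_right _ _) (min_le_left _ _)
  have hsε2 : s ≤ ε ^ 2 := le_trans (min_le_right _ _) (min_le_right _ _)
  have hsq : (ε ^ 2) ^ ((1:ℝ)/2) = ε := by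
    rw [← Real.rpow_natCast ε 2, ← Real.rpow_mul hε.le]
    norm_num
  have e3 : s ^ ((1:ℝ)/2) ≤ ε := by
    calc s ^ ((1:ℝ)/2) ≤ (ε ^ 2) ^ ((1:ℝ)/2) :=
          Real.rpow_le_rpow hs0.le hsε2 (by norm_num)
      _ = ε := hsq
  have e1 : s ^ p ≤ s * s ^ 2 := by
    calc s ^ p ≤ s ^ (3:ℝ) :=
          Real.rpow_le_rpow_of_exponent_ge hs0 hs1 (by linarith)
      _ = s * s ^ 2 := by
          rw [show (3:ℝ) = ((3:ℕ):ℝ) by norm_num, Real.rpow_natCast]; ring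
  have e2 : s ^ (p/2) ≤ s ^ 2 * s ^ ((1:ℝ)/2) := by
    calc s ^ (p/2) ≤ s ^ ((5:ℝ)/2) :=
          Real.rpow_le_rpow_of_exponent_ge hs0 hs1 (by linarith)
      _ = s ^ (2:ℝ) * s ^ ((1:ℝ)/2) := by rw [← Real.rpow_add hs0]; norm_num
      _ = s ^ 2 * s ^ ((1:ℝ)/2) := by
          rw [show (2:ℝ) = ((2:ℕ):ℝ) by norm_num, Real.rpow_natCast]
  have eA : c₃ * s ^ p * A₀ ≤ c₃ * (s * s ^ 2) * A₀ :=
    mul_le_mul_of_nonneg_right (mul_le_mul_of_nonneg_left e1 hc₃.le) hA₀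
  have eK : s ^ (p/2) * K ≤ (s ^ 2 * s ^ ((1:ℝ)/2)) * K :=
    mul_le_mul_of_nonneg_right e2 hK
  have hεe : (c₃ * A₀ + K + 1) * ε = c₂ * h₀ := by
    rw [hεdef]; field_simp
  have hint1 : 0 ≤ (ε - s) * (c₃ * s ^ 2 * A₀) :=
    mul_nonneg (by linarith) (by positivity)
  have hint2 : 0 ≤ (ε - s ^ ((1:ℝ)/2)) * (s ^ 2 * K) :=
    mul_nonneg (by linarith) (by positivity)
  have hint3 : 0 < s ^ 2 * ε := by positivity
  have hint4 : s ^ 2 * ((c₃ * A₀ + K + 1) * ε) = s ^ 2 * (c₂ * h₀) := by rw [hεe]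
  nlinarith [eA, eK, hint1, hint2, hint3, hint4]

lemma energy_le {M : Type*} {c₂ c₃ a Hb p : ℝ} (hc₂ : 0 < c₂) (hc₃ : 0 < c₃)
    (A h : M → ℝ) (G : M → M → ℝ)
    (hh : ∀ x, h x ≤ Hb) (hA : ∀ x, a ≤ A x)
    (hGpos : ∀ x y : M, x ≠ y → 0 < G x y)
    {l : ℕ} (t : Fin l → ℝ) (ξ : Fin l → M) (ht : ∀ i, 0 < t i)
    (hξ : Function.Injective ξ) :
    c₂ * ∑ i, (t i) ^ 2 * h (ξ i) - c₃ * ∑ i, (t i) ^ p * A (ξ i)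
      - c₃ * ∑ i, ∑ j, (if i ≠ j then (t i * t j) ^ (p/2) * G (ξ i) (ξ j) else 0)
    ≤ ∑ i, (c₂ * Hb * (t i) ^ 2 - c₃ * a * (t i) ^ p) := by
  have h1 : ∑ i, (t i) ^ 2 * h (ξ i) ≤ ∑ i, (t i) ^ 2 * Hb :=
    Finset.sum_le_sum fun i _ => mul_le_mul_of_nonneg_left (hh _) (sq_nonneg _)
  have h2 : ∑ i, (t i) ^ p * a ≤ ∑ i, (t i) ^ p * A (ξ i) :=
    Finset.sum_le_sum fun i _ =>
      mul_le_mul_of_nonneg_left (hA _) (Real.rpow_pos_of_pos (ht i) p).le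
  have h3 : 0 ≤ ∑ i, ∑ j, (if i ≠ j then (t i * t j) ^ (p/2) * G (ξ i) (ξ j) else 0) := by
    apply Finset.sum_nonneg; intro i _
    apply Finset.sum_nonneg; intro j _
    split
    · next hij =>
      exact le_of_lt (mul_pos (Real.rpow_pos_of_pos (mul_pos (ht i) (ht j)) _)
        (hGpos _ _ fun hh' => hij (hξ hh')))
    · exact le_rfl
  have e : ∑ i, (c₂ * Hb * (t i) ^ 2 - c₃ * a * (t i) ^ p)
      = c₂ * (∑ i, (t i) ^ 2 * Hb) - c₃ * (∑ i, (t i) ^ p * a) := by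
    rw [Finset.sum_sub_distrib, Finset.mul_sum, Finset.mul_sum]
    congr 1
    · exact Finset.sum_congr rfl fun i _ => by ring
    · exact Finset.sum_congr rfl fun i _ => by ring
  have m1 := mul_le_mul_of_nonneg_left h1 hc₂.le
  have m2 := mul_le_mul_of_nonneg_left h2 hc₃.le
  have m3 := mul_nonneg hc₃.le h3
  rw [e]; linarith

set_option maxHeartbeats 1000000

theorem stmt16 {M : Type*} [MetricSpace M] [CompactSpace M]
    (n k : ℕ) (hn : 7 ≤ n) (hk : 1 ≤ k)
    (c₂ c₃ : ℝ) (hc₂ : 0 < c₂) (hc₃ : 0 < c₃)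
    (A h : M → ℝ) (hAcont : Continuous A) (hApos : ∀ x, 0 < A x)
    (hAmin : ∃ a : ℝ, 0 < a ∧ ∀ x, a ≤ A x)
    (hhcont : Continuous h) (hhpos : ∃ x, 0 < h x)
    (hhinf : {x | 0 < h x}.Infinite)
    (G : M → M → ℝ)
    (hGcont : ContinuousOn (fun p : M × M => G p.1 p.2) {p | p.1 ≠ p.2})
    (hGpos : ∀ x y, x ≠ y → 0 < G x y)
    (hGblow : ∀ C : ℝ, ∃ δ > 0, ∀ x y, x ≠ y → dist x y < δ → C ≤ G x y)
    (S : ℕ → Set ℝ)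
    (hS : ∀ l, S l = {v | ∃ (t : Fin l → ℝ) (ξ : Fin l → M),
      (∀ i, 0 < t i) ∧ Function.Injective ξ ∧
      v = c₂ * ∑ i, (t i) ^ 2 * h (ξ i) - c₃ * ∑ i, (t i) ^ ((n:ℝ) - 2) * A (ξ i)
          - c₃ * ∑ i, ∑ j,
              (if i ≠ j then (t i * t j) ^ (((n:ℝ) - 2) / 2) * G (ξ i) (ξ j) else 0)}) :
    (∀ l, 1 ≤ l → l ≤ k → (S l).Nonempty ∧ BddAbove (S l)) ∧
    0 < sSup (S 1) ∧
    (∀ l, 1 ≤ l → l < k → sSup (S l) < sSup (S (l + 1))) := by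
  classical
  obtain ⟨a, ha, haA⟩ := hAmin
  obtain ⟨x₀, hx₀⟩ := hhpos
  set p : ℝ := (n : ℝ) - 2 with hpdef
  have hp5 : (5:ℝ) ≤ p := by
    have h7 : (7:ℝ) ≤ (n:ℝ) := by exact_mod_cast hn
    rw [hpdef]; linarith
  have hp3 : (3:ℝ) ≤ p := by linarith
  -- upper bounds for h and A
  obtain ⟨H₀, hH₀⟩ : ∃ C, ∀ x, h x ≤ C := by
    obtain ⟨C, hC⟩ := (isCompact_range hhcont).bddAbove
    exact ⟨C, fun x => hC ⟨x, rfl⟩⟩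
  set Hb : ℝ := max H₀ 1 with hHbdef
  have hHb1 : (1:ℝ) ≤ Hb := le_max_right _ _
  have hHb0 : (0:ℝ) < Hb := lt_of_lt_of_le one_pos hHb1
  have hhHb : ∀ x, h x ≤ Hb := fun x => (hH₀ x).trans (le_max_left _ _)
  obtain ⟨Ab, hAb⟩ : ∃ C, ∀ x, A x ≤ C := by
    obtain ⟨C, hC⟩ := (isCompact_range hAcont).bddAbove
    exact ⟨C, fun x => hC ⟨x, rfl⟩⟩
  have hAb0 : 0 ≤ Ab := le_trans (hApos x₀).le (hAb x₀)
  -- global bound B for the single-bubble profile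
  obtain ⟨T₀, hT₀1, hT₀⟩ := g_far hc₂ hc₃ ha hHb1 hp3 0
  set B : ℝ := c₂ * Hb * T₀ ^ 2 with hBdef
  have hB0 : 0 ≤ B := by positivity
  have gB : ∀ t : ℝ, 0 < t → c₂ * Hb * t ^ 2 - c₃ * a * t ^ p ≤ B := by
    intro t ht
    rcases le_or_gt T₀ t with hc | hc
    · exact (hT₀ t hc).trans hB0
    · have hr : 0 < t ^ p := Real.rpow_pos_of_pos ht p
      have ht2 : t ^ 2 ≤ T₀ ^ 2 := by nlinarith
      have := mul_le_mul_of_nonneg_left ht2 (mul_pos hc₂ hHb0).le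
      nlinarith [mul_pos (mul_pos hc₃ ha) hr]
  -- distinct points with h > 0
  have hemb := hhinf.natEmbedding
  set pts : ℕ → M := fun j => (hemb j : M) with hptsdef
  have hptsinj : Function.Injective pts := fun i j hij =>
    hemb.injective (Subtype.ext hij)
  have hptspos : ∀ j, 0 < h (pts j) := fun j => (hemb j).2
  -- Part 1
  have part1 : ∀ l, 1 ≤ l → l ≤ k → (S l).Nonempty ∧ BddAbove (S l) := by
    intro l _ _
    constructor
    · rw [hS]
      exact ⟨_, ⟨fun _ => 1, fun i => pts i.val, fun _ => one_pos,
        fun i j hij => Fin.val_injective (hptsinj hij), rfl⟩⟩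
    · refine ⟨(l:ℝ) * B, ?_⟩
      rintro v hv
      rw [hS] at hv
      obtain ⟨t, ξ, ht, hξ, rfl⟩ := hv
      refine le_trans (energy_le hc₂ hc₃ A h G hhHb haA hGpos t ξ ht hξ) ?_
      calc ∑ i, (c₂ * Hb * (t i) ^ 2 - c₃ * a * (t i) ^ p)
          ≤ ∑ _i : Fin l, B := Finset.sum_le_sum fun i _ => gB (t i) (ht i)
        _ = (l:ℝ) * B := by
            simp [Finset.sum_const, Finset.card_univ, nsmul_eq_mul]
  refine ⟨part1, ?_, ?_⟩
  · -- 0 < sSup (S 1)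
    obtain ⟨s, hs0, hs1, hgain⟩ := small_gain hc₂ hc₃ hp5 hx₀ (hApos x₀).le (le_refl (0:ℝ))
    have hmem : c₂ * s ^ 2 * h x₀ - c₃ * s ^ p * A x₀ ∈ S 1 := by
      rw [hS]
      refine ⟨fun _ => s, fun _ => x₀, fun _ => hs0,
        fun i j _ => Subsingleton.elim i j, ?_⟩
      simp [Fin.sum_univ_one]
      ring
    have hle := le_csSup (part1 1 le_rfl hk).2 hmem
    have : 0 < c₂ * s ^ 2 * h x₀ - c₃ * s ^ p * A x₀ := by
      have : s ^ (p/2) * 0 = 0 := by ring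
      linarith [hgain]
    linarith
  · -- strict monotonicity
    intro l hl1 hlk
    obtain ⟨hne, hbd⟩ := part1 l hl1 (le_of_lt hlk)
    obtain ⟨-, hbd1⟩ := part1 (l+1) (by omega) (by omega)
    set m : ℝ := sSup (S l) with hmdef
    -- choose l+1 separated points with h > 0
    set q : Fin (l+1) → M := fun j => pts j.val with hqdef
    have hqinj : Function.Injective q := fun i j hij =>
      Fin.val_injective (hptsinj hij)
    have hqpos : ∀ j, 0 < h (q j) := fun j => hptspos j.val
    obtain ⟨δ, hδ0, hδle⟩ : ∃ δ > 0, ∀ j j' : Fin (l+1), j ≠ j' → δ ≤ dist (q j) (q j') := by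
      set F := (Finset.univ.filter (fun pr : Fin (l+1) × Fin (l+1) => pr.1 ≠ pr.2)) with hFdef
      have h01 : (0 : Fin (l+1)) ≠ Fin.last l := by
        intro hq01
        have := congrArg Fin.val hq01
        simp [Fin.last] at this
        omega
      have hFne : F.Nonempty := ⟨(0, Fin.last l), by simp [hFdef, h01]⟩
      refine ⟨F.inf' hFne (fun pr => dist (q pr.1) (q pr.2)), ?_, ?_⟩
      · rw [gt_iff_lt, Finset.lt_inf'_iff]
        rintro ⟨j, j'⟩ hjj
        simp only [hFdef, Finset.mem_filter, Finset.mem_univ, true_and] at hjj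
        exact dist_pos.2 fun hq' => hjj (hqinj hq')
      · intro j j' hjj
        have hmemF : ((j, j') : Fin (l+1) × Fin (l+1)) ∈ F := by
          rw [hFdef]; simp only [Finset.mem_filter, Finset.mem_univ, true_and]; exact hjj
        exact Finset.inf'_le (fun pr : Fin (l+1) × Fin (l+1) => dist (q pr.1) (q pr.2)) hmemF
    -- uniform lower bound for h at the q's
    set h₀ : ℝ := Finset.univ.inf' Finset.univ_nonempty (fun j : Fin (l+1) => h (q j))
      with hh₀def
    have hh₀pos : 0 < h₀ := by
      rw [hh₀def, Finset.lt_inf'_iff]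
      intro j _
      exact hqpos j
    have hh₀le : ∀ j, h₀ ≤ h (q j) := fun j =>
      Finset.inf'_le _ (Finset.mem_univ j)
    -- uniform bound for G away from the diagonal
    obtain ⟨Γ, hΓ0, hΓ⟩ : ∃ Γ : ℝ, 0 ≤ Γ ∧ ∀ x y : M, δ/2 ≤ dist x y → G x y ≤ Γ := by
      set Kc : Set (M × M) := {pr | δ/2 ≤ dist pr.1 pr.2} with hKcdef
      have hKcl : IsClosed Kc := isClosed_le continuous_const continuous_dist
      have hKc : IsCompact Kc := hKcl.isCompact
      have hsub : Kc ⊆ {pr : M × M | pr.1 ≠ pr.2} := by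
        rintro ⟨x, y⟩ hpr heq
        simp only [hKcdef, Set.mem_setOf_eq] at hpr heq
        rw [heq] at hpr
        simp [dist_self] at hpr
        linarith
      have himg := hKc.image_of_continuousOn (hGcont.mono hsub)
      obtain ⟨Γ, hΓ⟩ := himg.bddAbove
      refine ⟨max Γ 0, le_max_right _ _, fun x y hxy => ?_⟩
      exact le_trans (hΓ ⟨(x, y), hxy, rfl⟩) (le_max_left _ _)
    -- uniform bound T for the t-variables of near-optimal configurations
    obtain ⟨T, hT1, hT⟩ := g_far hc₂ hc₃ ha hHb1 hp3 (m - 2 - ((l:ℝ) - 1) * B)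
    have hT0 : (0:ℝ) < T := lt_of_lt_of_le one_pos hT1
    set K : ℝ := 2 * c₃ * l * T ^ (p/2) * Γ with hKdef
    have hK0 : 0 ≤ K := by
      have := (Real.rpow_pos_of_pos hT0 (p/2)).le
      rw [hKdef]; positivity
    obtain ⟨s, hs0, hs1, hgain⟩ := small_gain hc₂ hc₃ hp5 hh₀pos hAb0 hK0
    set γ : ℝ := c₂ * s ^ 2 * h₀ - c₃ * s ^ p * Ab - s ^ (p/2) * K with hγdef
    have hγ0 : 0 < γ := hgain
    have hεm : m - min 1 γ < m := by
      have : 0 < min 1 γ := lt_min one_pos hγ0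
      linarith
    obtain ⟨v, hvS, hvgt⟩ := exists_lt_of_lt_csSup hne hεm
    have hvmem := hvS
    rw [hS] at hvmem
    obtain ⟨t, ξ, ht, hξ, hveq⟩ := hvmem
    -- bound the t i
    have htT : ∀ i, t i ≤ T := by
      intro i0
      by_contra hcon
      push_neg at hcon
      have hsum : v ≤ ∑ i, (c₂ * Hb * (t i) ^ 2 - c₃ * a * (t i) ^ p) := by
        rw [hveq]
        exact energy_le hc₂ hc₃ A h G hhHb haA hGpos t ξ ht hξ
      have hsplit : ∑ i, (c₂ * Hb * (t i) ^ 2 - c₃ * a * (t i) ^ p)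
          = (c₂ * Hb * (t i0) ^ 2 - c₃ * a * (t i0) ^ p)
            + ∑ i ∈ Finset.univ.erase i0, (c₂ * Hb * (t i) ^ 2 - c₃ * a * (t i) ^ p) :=
        (Finset.add_sum_erase _ _ (Finset.mem_univ i0)).symm
      have hrest : ∑ i ∈ Finset.univ.erase i0, (c₂ * Hb * (t i) ^ 2 - c₃ * a * (t i) ^ p)
          ≤ ((l:ℝ) - 1) * B := by
        calc ∑ i ∈ Finset.univ.erase i0, (c₂ * Hb * (t i) ^ 2 - c₃ * a * (t i) ^ p)
            ≤ ∑ _i ∈ Finset.univ.erase i0, B :=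
              Finset.sum_le_sum fun i _ => gB (t i) (ht i)
          _ = ((l:ℝ) - 1) * B := by
              rw [Finset.sum_const, Finset.card_erase_of_mem (Finset.mem_univ i0),
                Finset.card_univ, Fintype.card_fin, nsmul_eq_mul]
              have : ((l - 1 : ℕ) : ℝ) = (l:ℝ) - 1 := by
                have : 1 ≤ l := hl1
                push_cast [Nat.cast_sub this]
                ring
              rw [this]
      have hbig := hT (t i0) hcon.le
      have : v ≤ m - 2 := by linarith
      have hm1 : min 1 γ ≤ 1 := min_le_left _ _
      linarith
    -- choose a far-away new point
    obtain ⟨j, hjfar⟩ : ∃ j : Fin (l+1), ∀ i : Fin l, δ/2 ≤ dist (ξ i) (q j) := by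
      by_contra hcon
      push_neg at hcon
      choose φ hφ using hcon
      have hcard : Fintype.card (Fin l) < Fintype.card (Fin (l+1)) := by simp
      obtain ⟨j, j', hjj, heqφ⟩ := Fintype.exists_ne_map_eq_of_card_lt φ hcard
      have hdd := hδle j j' hjj
      have d1 := hφ j
      have d2 := hφ j'
      rw [heqφ] at d1
      have htri : dist (q j) (q j') ≤ dist (q j) (ξ (φ j')) + dist (ξ (φ j')) (q j') :=
        dist_triangle _ _ _
      rw [dist_comm] at d1
      linarith
    have hξq : ∀ i, ξ i ≠ q j := by
      intro i heq
      have := hjfar i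
      rw [heq] at this
      simp [dist_self] at this
      linarith
    -- the new configuration
    set t' : Fin (l+1) → ℝ := Fin.snoc t s with ht'def
    set ξ' : Fin (l+1) → M := Fin.snoc ξ (q j) with hξ'def
    have ht' : ∀ i, 0 < t' i := by
      intro i
      induction i using Fin.lastCases with
      | last => rw [ht'def]; simpa [Fin.snoc_last] using hs0
      | cast i => rw [ht'def]; simpa [Fin.snoc_castSucc] using ht i
    have hξ' : Function.Injective ξ' := snoc_injective' hξ hξq
    -- value of the new configuration
    set v' : ℝ := c₂ * ∑ i, (t' i) ^ 2 * h (ξ' i) - c₃ * ∑ i, (t' i) ^ p * A (ξ' i)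
        - c₃ * ∑ i, ∑ j',
            (if i ≠ j' then (t' i * t' j') ^ (p / 2) * G (ξ' i) (ξ' j') else 0) with hv'def
    have hv'mem : v' ∈ S (l+1) := by
      rw [hS]
      exact ⟨t', ξ', ht', hξ', hv'def⟩
    -- compute the sums
    have sum1 : ∑ i, (t' i) ^ 2 * h (ξ' i)
        = (∑ i : Fin l, (t i) ^ 2 * h (ξ i)) + s ^ 2 * h (q j) := by
      rw [Fin.sum_univ_castSucc]
      simp [ht'def, hξ'def, Fin.snoc_castSucc, Fin.snoc_last]
    have sum2 : ∑ i, (t' i) ^ p * A (ξ' i)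
        = (∑ i : Fin l, (t i) ^ p * A (ξ i)) + s ^ p * A (q j) := by
      rw [Fin.sum_univ_castSucc]
      simp [ht'def, hξ'def, Fin.snoc_castSucc, Fin.snoc_last]
    have sum3 : ∑ i, ∑ j', (if i ≠ j' then (t' i * t' j') ^ (p/2) * G (ξ' i) (ξ' j') else 0)
        = (∑ i : Fin l, ∑ j', (if i ≠ j' then (t i * t j') ^ (p/2) * G (ξ i) (ξ j') else 0))
          + ∑ i : Fin l, ((t i * s) ^ (p/2) * G (ξ i) (q j)
              + (s * t i) ^ (p/2) * G (q j) (ξ i)) := by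
      rw [double_sum_snoc'
        (fun i j' => if i ≠ j' then (t' i * t' j') ^ (p/2) * G (ξ' i) (ξ' j') else 0)
        (by simp)]
      congr 1
      · apply Finset.sum_congr rfl
        intro i _
        apply Finset.sum_congr rfl
        intro j' _
        simp [ht'def, hξ'def, Fin.snoc_castSucc, Fin.castSucc_inj]
      · apply Finset.sum_congr rfl
        intro i _
        have hne : i.castSucc ≠ Fin.last l := (Fin.castSucc_lt_last i).ne
        simp [ht'def, hξ'def, Fin.snoc_castSucc, Fin.snoc_last, hne, hne.symm]
    -- bound the interaction with the new bubble
    have hcrossbd : ∑ i : Fin l, ((t i * s) ^ (p/2) * G (ξ i) (q j)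
        + (s * t i) ^ (p/2) * G (q j) (ξ i)) ≤ (l:ℝ) * (2 * T ^ (p/2) * Γ * s ^ (p/2)) := by
      calc ∑ i : Fin l, ((t i * s) ^ (p/2) * G (ξ i) (q j)
            + (s * t i) ^ (p/2) * G (q j) (ξ i))
          ≤ ∑ _i : Fin l, (2 * T ^ (p/2) * Γ * s ^ (p/2)) := by
            apply Finset.sum_le_sum
            intro i _
            have hrw1 : (t i * s) ^ (p/2) = (t i) ^ (p/2) * s ^ (p/2) :=
              Real.mul_rpow (ht i).le hs0.le
            have hrw2 : (s * t i) ^ (p/2) = (t i) ^ (p/2) * s ^ (p/2) := by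
              rw [mul_comm s (t i)]; exact Real.mul_rpow (ht i).le hs0.le
            have htle : (t i) ^ (p/2) ≤ T ^ (p/2) :=
              Real.rpow_le_rpow (ht i).le (htT i) (by linarith)
            have hG1 : G (ξ i) (q j) ≤ Γ := hΓ _ _ (hjfar i)
            have hG2 : G (q j) (ξ i) ≤ Γ := by
              apply hΓ
              rw [dist_comm]
              exact hjfar i
            have hGp1 : 0 ≤ G (ξ i) (q j) := (hGpos _ _ (hξq i)).le
            have hGp2 : 0 ≤ G (q j) (ξ i) := (hGpos _ _ (Ne.symm (hξq i))).le
            have hsp : 0 ≤ s ^ (p/2) := (Real.rpow_pos_of_pos hs0 _).le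
            have htp : 0 ≤ (t i) ^ (p/2) := (Real.rpow_pos_of_pos (ht i) _).le
            have b1 : (t i) ^ (p/2) * s ^ (p/2) * G (ξ i) (q j)
                ≤ T ^ (p/2) * s ^ (p/2) * Γ := by
              apply mul_le_mul (mul_le_mul_of_nonneg_right htle hsp) hG1 hGp1
              positivity
            have b2 : (t i) ^ (p/2) * s ^ (p/2) * G (q j) (ξ i)
                ≤ T ^ (p/2) * s ^ (p/2) * Γ := by
              apply mul_le_mul (mul_le_mul_of_nonneg_right htle hsp) hG2 hGp2
              positivity
            rw [hrw1, hrw2]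
            linarith [b1, b2]
        _ = (l:ℝ) * (2 * T ^ (p/2) * Γ * s ^ (p/2)) := by
            rw [Finset.sum_const, Finset.card_univ, Fintype.card_fin, nsmul_eq_mul]
    -- the gain
    have hgainle : v + γ ≤ v' := by
      have hA' : A (q j) ≤ Ab := hAb _
      have hh' : h₀ ≤ h (q j) := hh₀le j
      have hs2 : (0:ℝ) ≤ s ^ 2 := sq_nonneg s
      have hsp : (0:ℝ) < s ^ p := Real.rpow_pos_of_pos hs0 _
      have hKs : c₃ * ((l:ℝ) * (2 * T ^ (p/2) * Γ * s ^ (p/2))) = s ^ (p/2) * K := by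
        rw [hKdef]; ring
      have hcross : c₃ * (∑ i : Fin l, ((t i * s) ^ (p/2) * G (ξ i) (q j)
          + (s * t i) ^ (p/2) * G (q j) (ξ i))) ≤ s ^ (p/2) * K := by
        rw [← hKs]
        exact mul_le_mul_of_nonneg_left hcrossbd hc₃.le
      have e1 : c₂ * s ^ 2 * h₀ ≤ c₂ * (s ^ 2 * h (q j)) := by
        have h' := mul_le_mul_of_nonneg_left (mul_le_mul_of_nonneg_left hh' hs2) hc₂.le
        linarith
      have e2 : c₃ * (s ^ p * A (q j)) ≤ c₃ * s ^ p * Ab := by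
        have h' := mul_le_mul_of_nonneg_left (mul_le_mul_of_nonneg_left hA' hsp.le) hc₃.le
        linarith
      rw [hv'def, sum1, sum2, sum3]
      have expand : c₂ * ((∑ i : Fin l, (t i) ^ 2 * h (ξ i)) + s ^ 2 * h (q j))
          - c₃ * ((∑ i : Fin l, (t i) ^ p * A (ξ i)) + s ^ p * A (q j))
          - c₃ * ((∑ i : Fin l, ∑ j',
                (if i ≠ j' then (t i * t j') ^ (p/2) * G (ξ i) (ξ j') else 0))
              + ∑ i : Fin l, ((t i * s) ^ (p/2) * G (ξ i) (q j)
                  + (s * t i) ^ (p/2) * G (q j) (ξ i)))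
          = v + (c₂ * (s ^ 2 * h (q j)) - c₃ * (s ^ p * A (q j))
              - c₃ * (∑ i : Fin l, ((t i * s) ^ (p/2) * G (ξ i) (q j)
                  + (s * t i) ^ (p/2) * G (q j) (ξ i)))) := by
        rw [hveq]; ring
      rw [expand]
      have hγle : γ ≤ c₂ * (s ^ 2 * h (q j)) - c₃ * (s ^ p * A (q j))
          - c₃ * (∑ i : Fin l, ((t i * s) ^ (p/2) * G (ξ i) (q j)
              + (s * t i) ^ (p/2) * G (q j) (ξ i))) := by
        rw [hγdef]; linarith [e1, e2, hcross]
      linarith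
    have hfinal : m < v' := by
      have hmin : min 1 γ ≤ γ := min_le_right _ _
      linarith
    exact lt_of_lt_of_le hfinal (le_csSup hbd1 hv'mem)
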